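/- arXiv:1207.2662 — 3 statements merged into one kernel-verified Lean document; each statement's English description precedes it below -/
import Mathlib

section
/- (Sharpness of the polynomial Bohnenblust–Hille exponent) Let m ≥ 2 be an integer and let q be a real number with 0 < q < 2m/(m+1). Then there is no constant C > 0 such that for every positive integer n and every m-homogeneous polynomial P(z) = ∑_{|α|=m} a_α z^α on ℂ^n one has (∑_{|α|=m} |a_α|^q)^{1/q} ≤ C · sup_{z ∈ D̄^n} |P(z)|. Equivalently, for every C > 0 there exist n and an m-homogeneous polynomial P on ℂ^n with (∑_{|α|=m} |a_α|^q)^{1/q} > C · sup_{z ∈ D̄^n} |P(z)|. -/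
/-- The supremum of `|f z|` over the closed unit polydisc in `ℂ^n`. -/
noncomputable def polydiscSup (n : ℕ) (f : (Fin n → ℂ) → ℂ) : ℝ :=
  sSup ((fun z => ‖f z‖) '' {z : Fin n → ℂ | ∀ i, ‖z i‖ ≤ 1})

namespace BHS

noncomputable def ww (n : ℕ) : ℂ := Complex.exp (2 * Real.pi * Complex.I / n)

variable {n : ℕ}

lemma ww_prim (hn : n ≠ 0) : IsPrimitiveRoot (ww n) n := Complex.isPrimitiveRoot_exp n hn

lemma ww_ne_zero : ww n ≠ 0 := Complex.exp_ne_zero _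

lemma abs_ww : ‖ww n‖ = 1 := by
  rw [ww, Complex.norm_exp]
  norm_num [Complex.div_re, Complex.mul_re, Complex.mul_im]

/-- orthogonality -/
lemma orth (hn : n ≠ 0) (a b : Fin n) :
    ∑ i : Fin n, (ww n ^ ((a:ℤ) - (b:ℤ))) ^ (i:ℕ) = if a = b then (n:ℂ) else 0 := by
  set ζ : ℂ := ww n ^ ((a:ℤ) - (b:ℤ)) with hζ
  by_cases hab : a = b
  · subst hab
    simp [hζ]
  · rw [if_neg hab]
    have hζn : ζ ^ n = 1 := by
      rw [hζ, ← zpow_natCast, ← zpow_mul, mul_comm, zpow_mul, zpow_natCast,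
        (ww_prim hn).pow_eq_one, one_zpow]
    have hζ1 : ζ ≠ 1 := by
      intro h1
      obtain ⟨k, hk⟩ := ((ww_prim hn).zpow_eq_one_iff_dvd _).mp h1
      have ha := a.isLt
      have hb := b.isLt
      have hne : (a:ℕ) ≠ (b:ℕ) := fun h => hab (Fin.val_injective h)
      have h0 : ((a:ℤ) - (b:ℤ)) = 0 := by
        refine Int.eq_zero_of_dvd_of_natAbs_lt_natAbs ⟨k, hk⟩ ?_
        omega
      omega
    rw [Fin.sum_univ_eq_sum_range (fun i => ζ ^ i), geom_sum_eq hζ1, hζn, sub_self, zero_div]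


lemma key_term (i i' i'' : Fin n) :
    ww n ^ ((i:ℕ) * (i':ℕ)) * (starRingEnd ℂ) (ww n ^ ((i:ℕ) * (i'':ℕ)))
      = (ww n ^ ((i':ℤ) - (i'':ℤ))) ^ (i:ℕ) := by
  rw [map_pow, ← Complex.inv_eq_conj abs_ww, ← zpow_natCast (ww n) ((i:ℕ) * (i':ℕ)),
    ← zpow_natCast (ww n)⁻¹, inv_zpow, ← zpow_neg, ← zpow_add₀ ww_ne_zero,
    ← zpow_natCast (ww n ^ ((i':ℤ) - (i'':ℤ))), ← zpow_mul]
  congr 1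
  push_cast
  ring

lemma parseval (hn : n ≠ 0) (v : Fin n → ℂ) :
    ∑ i : Fin n, Complex.normSq (∑ i' : Fin n, ww n ^ ((i:ℕ) * (i':ℕ)) * v i')
      = n * ∑ i' : Fin n, Complex.normSq (v i') := by
  have hC : ∑ i : Fin n, ((∑ i' : Fin n, ww n ^ ((i:ℕ) * (i':ℕ)) * v i') *
        (starRingEnd ℂ) (∑ i' : Fin n, ww n ^ ((i:ℕ) * (i':ℕ)) * v i'))
      = (n:ℂ) * ∑ i' : Fin n, v i' * (starRingEnd ℂ) (v i') := by
    calc ∑ i : Fin n, ((∑ i' : Fin n, ww n ^ ((i:ℕ) * (i':ℕ)) * v i') *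
          (starRingEnd ℂ) (∑ i' : Fin n, ww n ^ ((i:ℕ) * (i':ℕ)) * v i'))
        = ∑ i : Fin n, ∑ i' : Fin n, ∑ i'' : Fin n,
            (ww n ^ ((i':ℤ) - (i'':ℤ))) ^ (i:ℕ) * (v i' * (starRingEnd ℂ) (v i'')) := by
          refine Finset.sum_congr rfl fun i _ => ?_
          rw [map_sum, Finset.sum_mul_sum]
          refine Finset.sum_congr rfl fun i' _ => Finset.sum_congr rfl fun i'' _ => ?_
          rw [map_mul, ← key_term i i' i'']
          ring
      _ = ∑ i' : Fin n, ∑ i'' : Fin n,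
            (∑ i : Fin n, (ww n ^ ((i':ℤ) - (i'':ℤ))) ^ (i:ℕ)) * (v i' * (starRingEnd ℂ) (v i'')) := by
          rw [Finset.sum_comm]
          refine Finset.sum_congr rfl fun i' _ => ?_
          rw [Finset.sum_comm]
          refine Finset.sum_congr rfl fun i'' _ => ?_
          rw [Finset.sum_mul]
      _ = ∑ i' : Fin n, (n:ℂ) * (v i' * (starRingEnd ℂ) (v i')) := by
          refine Finset.sum_congr rfl fun i' _ => ?_
          have : ∀ i'' : Fin n, (∑ i : Fin n, (ww n ^ ((i':ℤ) - (i'':ℤ))) ^ (i:ℕ))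
              = if i' = i'' then (n:ℂ) else 0 := fun i'' => orth hn i' i''
          simp only [this]
          simp
      _ = (n:ℂ) * ∑ i' : Fin n, v i' * (starRingEnd ℂ) (v i') := by rw [Finset.mul_sum]
  simp only [Complex.mul_conj] at hC
  exact_mod_cast hC


variable (n) in
noncomputable def chain (w : ℕ → Fin n → ℂ) : ℕ → Fin n → ℂ
  | 0 => w 0
  | (k+1) => fun i => w (k+1) i * ∑ i' : Fin n, ww n ^ ((i:ℕ) * (i':ℕ)) * chain w k i'

lemma chain_bound (hn : n ≠ 0) (w : ℕ → Fin n → ℂ)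
    (hw : ∀ k i, ‖w k i‖ ≤ 1) (k : ℕ) :
    ∑ i : Fin n, Complex.normSq (chain n w k i) ≤ (n:ℝ) ^ (k+1) := by
  have hw2 : ∀ k i, Complex.normSq (w k i) ≤ 1 := by
    intro k i
    rw [← Complex.sq_norm]
    nlinarith [hw k i, norm_nonneg (w k i)]
  induction k with
  | zero =>
    simp only [chain, pow_one]
    calc ∑ i : Fin n, Complex.normSq (w 0 i) ≤ ∑ _i : Fin n, (1:ℝ) :=
          Finset.sum_le_sum fun i _ => hw2 0 i
      _ = (n:ℝ) ^ (0+1) := by simp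
  | succ k ih =>
    calc ∑ i : Fin n, Complex.normSq (chain n w (k+1) i)
        ≤ ∑ i : Fin n, Complex.normSq (∑ i' : Fin n, ww n ^ ((i:ℕ) * (i':ℕ)) * chain n w k i') := by
          refine Finset.sum_le_sum fun i _ => ?_
          simp only [chain, Complex.normSq_mul]
          calc Complex.normSq (w (k+1) i) * Complex.normSq (∑ i' : Fin n, ww n ^ ((i:ℕ) * (i':ℕ)) * chain n w k i')
              ≤ 1 * Complex.normSq (∑ i' : Fin n, ww n ^ ((i:ℕ) * (i':ℕ)) * chain n w k i') :=
                mul_le_mul_of_nonneg_right (hw2 _ _) (Complex.normSq_nonneg _)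
            _ = _ := one_mul _
      _ = n * ∑ i' : Fin n, Complex.normSq (chain n w k i') := parseval hn _
      _ ≤ n * (n:ℝ) ^ (k+1) := by
          refine mul_le_mul_of_nonneg_left ih (by positivity)
      _ = (n:ℝ) ^ (k+2) := by ring

lemma chain_eq (w : ℕ → Fin n → ℂ) (k : ℕ) (i : Fin n) :
    chain n w k i = ∑ j : Fin (k+1) → Fin n,
      if j (Fin.last k) = i then
        (∏ t : Fin k, ww n ^ ((j t.castSucc : ℕ) * (j t.succ : ℕ))) *
          ∏ t : Fin (k+1), w t (j t)
      else 0 := by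
  induction k generalizing i with
  | zero =>
    rw [← (Equiv.funUnique (Fin 1) (Fin n)).symm.sum_comp]
    simp [chain, Fin.last]
  | succ k ih =>
    have hsnoc : ∀ f : (Fin (k+1+1) → Fin n) → ℂ,
        ∑ j : Fin (k+1+1) → Fin n, f j
          = ∑ x : Fin n, ∑ p : Fin (k+1) → Fin n, f (Fin.snoc p x) := by
      intro f
      rw [← (Fin.snocEquiv (fun _ => Fin n)).sum_comp f, Fintype.sum_prod_type]
      rfl
    rw [hsnoc, Finset.sum_comm]
    simp only [Fin.snoc_last, Finset.sum_ite_eq', Finset.mem_univ, if_true]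
    simp only [chain, ih]
    simp only [Finset.mul_sum, mul_ite, mul_zero]
    rw [Finset.sum_comm]
    simp only [Finset.sum_ite_eq, Finset.mem_univ, if_true]
    refine Finset.sum_congr rfl fun p _ => ?_
    simp only [Fin.prod_univ_castSucc, Fin.succ_castSucc, Fin.snoc_castSucc, Fin.snoc_last,
      Fin.coe_castSucc, Fin.val_last, Fin.val_succ, Fin.succ_last]
    rw [mul_comm ((i:ℕ)) ((p (Fin.last k) : ℕ))]
    ring


lemma construction (q : ℝ) (k ν : ℕ) (hν : ν ≠ 0) :
    ∃ a : (Fin ((k+1)*ν) → ℕ) → ℂ,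
      ((ν:ℝ)^(k+1) ≤ ∑ α ∈ Finset.Nat.antidiagonalTuple ((k+1)*ν) (k+1),
          ‖a α‖ ^ q) ∧
      polydiscSup ((k+1)*ν) (fun z => ∑ α ∈ Finset.Nat.antidiagonalTuple ((k+1)*ν) (k+1),
          a α * ∏ i, z i ^ α i) ≤ Real.sqrt ((ν:ℝ)^(k+2)) := by
  classical
  set m := k + 1 with hm
  set N := m * ν with hN
  set e : Fin m × Fin ν ≃ Fin N := finProdFinEquiv with he
  set αof : (Fin m → Fin ν) → (Fin N → ℕ) :=
    fun j p => if j (e.symm p).1 = (e.symm p).2 then 1 else 0 with hαof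
  have hinj : Function.Injective αof := by
    intro j j' hjj
    funext t
    have h1 := congrFun hjj (e (t, j t))
    simp only [hαof, Equiv.symm_apply_apply] at h1
    rw [if_pos trivial] at h1
    by_contra hne
    rw [if_neg (fun hh => hne hh.symm)] at h1
    exact one_ne_zero h1
  have hmem : ∀ j, αof j ∈ Finset.Nat.antidiagonalTuple N m := by
    intro j
    rw [Finset.Nat.mem_antidiagonalTuple, ← e.sum_comp (αof j), Fintype.sum_prod_type]
    simp [hαof, Equiv.symm_apply_apply, Finset.sum_ite_eq]
  set Q : (Fin m → Fin ν) → ℕ :=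
    fun j => ∑ t : Fin k, (j (Fin.castSucc t) : ℕ) * (j t.succ : ℕ) with hQ
  set a : (Fin N → ℕ) → ℂ :=
    fun α => ∑ j : Fin m → Fin ν, if αof j = α then ww ν ^ Q j else 0 with ha
  have haof : ∀ j, a (αof j) = ww ν ^ Q j := by
    intro j
    rw [ha]
    dsimp only
    rw [Finset.sum_eq_single j (fun j' _ hj' => if_neg (fun hh => hj' (hinj hh)))
      (fun habs => absurd (Finset.mem_univ j) habs), if_pos rfl]
  refine ⟨a, ?_, ?_⟩
  · have hsub : Finset.univ.image αof ⊆ Finset.Nat.antidiagonalTuple N m := by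
      intro α hα
      obtain ⟨j, _, rfl⟩ := Finset.mem_image.mp hα
      exact hmem j
    have h1 : ∑ α ∈ Finset.univ.image αof, ‖a α‖ ^ q
        ≤ ∑ α ∈ Finset.Nat.antidiagonalTuple N m, ‖a α‖ ^ q :=
      Finset.sum_le_sum_of_subset_of_nonneg hsub
        (fun α _ _ => Real.rpow_nonneg (norm_nonneg _) q)
    have h2 : ∑ α ∈ Finset.univ.image αof, ‖a α‖ ^ q = (ν:ℝ)^m := by
      rw [Finset.sum_image (fun j _ j' _ hjj => hinj hjj)]
      have hone : ∀ j : Fin m → Fin ν, ‖a (αof j)‖ ^ q = 1 := by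
        intro j
        rw [haof, norm_pow, abs_ww, one_pow, Real.one_rpow]
      simp only [hone]
      simp [Finset.card_univ, Fintype.card_fun]
    calc (ν:ℝ)^m = ∑ α ∈ Finset.univ.image αof, ‖a α‖ ^ q := h2.symm
      _ ≤ _ := h1
  · apply Real.sSup_le
    · rintro x ⟨z, hz, rfl⟩
      simp only [Set.mem_setOf_eq] at hz
      set w : ℕ → Fin ν → ℂ := fun t i => if h : t < m then z (e (⟨t, h⟩, i)) else 1 with hw
      have hwb : ∀ t i, ‖w t i‖ ≤ 1 := by
        intro t i
        rw [hw]
        dsimp only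
        split
        · exact hz _
        · simp
      have hPz : ∑ α ∈ Finset.Nat.antidiagonalTuple N m, a α * ∏ i, z i ^ α i
          = ∑ i : Fin ν, chain ν w k i := by
        have step1 : ∑ α ∈ Finset.Nat.antidiagonalTuple N m, a α * ∏ i, z i ^ α i
            = ∑ j : Fin m → Fin ν, ww ν ^ Q j * ∏ t : Fin m, z (e (t, j t)) := by
          rw [ha]
          simp only [Finset.sum_mul, ite_mul, zero_mul]
          rw [Finset.sum_comm]
          refine Finset.sum_congr rfl fun j _ => ?_
          rw [Finset.sum_ite_eq (Finset.Nat.antidiagonalTuple N m) (αof j)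
            (fun α => ww ν ^ Q j * ∏ i, z i ^ α i), if_pos (hmem j)]
          congr 1
          rw [← e.prod_comp (fun p => z p ^ αof j p), Fintype.prod_prod_type]
          refine Finset.prod_congr rfl fun t _ => ?_
          simp only [hαof, Equiv.symm_apply_apply]
          rw [Finset.prod_congr rfl (fun i _ => pow_ite (j t = i) (z (e (t,i))) 1 0)]
          simp [Finset.prod_ite_eq]
        have step2 : ∑ i : Fin ν, chain ν w k i
            = ∑ j : Fin m → Fin ν, ww ν ^ Q j * ∏ t : Fin m, z (e (t, j t)) := by
          simp only [chain_eq]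
          rw [Finset.sum_comm]
          refine Finset.sum_congr rfl fun j _ => ?_
          rw [Finset.sum_ite_eq Finset.univ (j (Fin.last k)), if_pos (Finset.mem_univ _)]
          rw [Finset.prod_pow_eq_pow_sum]
          congr 1
          refine Finset.prod_congr rfl fun t _ => ?_
          rw [hw]
          dsimp only
          rw [dif_pos t.isLt]
        rw [step1, ← step2]
      show ‖∑ α ∈ Finset.Nat.antidiagonalTuple N m, a α * ∏ i, z i ^ α i‖ ≤ _
      rw [hPz]
      have habs : ‖∑ i : Fin ν, chain ν w k i‖
          ≤ ∑ i : Fin ν, ‖chain ν w k i‖ := norm_sum_le _ _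
      set A := ∑ i : Fin ν, ‖chain ν w k i‖ with hA
      have hA0 : 0 ≤ A := Finset.sum_nonneg fun i _ => norm_nonneg _
      have hA2 : A^2 ≤ (ν:ℝ)^(k+2) := by
        calc A^2 ≤ (Finset.univ (α := Fin ν)).card * ∑ i : Fin ν, ‖chain ν w k i‖^2 :=
              sq_sum_le_card_mul_sum_sq
          _ = ν * ∑ i : Fin ν, Complex.normSq (chain ν w k i) := by
              simp [Complex.sq_norm, Finset.card_univ]
          _ ≤ ν * (ν:ℝ)^(k+1) :=
              mul_le_mul_of_nonneg_left (chain_bound hν w hwb k) (by positivity)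
          _ = (ν:ℝ)^(k+2) := by ring
      calc ‖∑ i : Fin ν, chain ν w k i‖ ≤ A := habs
        _ = Real.sqrt (A^2) := (Real.sqrt_sq hA0).symm
        _ ≤ Real.sqrt ((ν:ℝ)^(k+2)) := Real.sqrt_le_sqrt hA2
    · positivity

end BHS

/-- **Sharpness of the polynomial Bohnenblust–Hille exponent.** For `m ≥ 2` and
`0 < q < 2m/(m+1)`, there is no constant `C > 0` such that for every `n ≥ 1` and every
`m`-homogeneous polynomial `P(z) = ∑_{|α| = m} a α • z ^ α` on `ℂ^n` one has
`(∑_{|α| = m} |a α| ^ q) ^ (1/q) ≤ C * sup_{z ∈ D̄^n} |P z|`. -/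
theorem polynomial_bohnenblust_hille_sharp (m : ℕ) (hm : 2 ≤ m) (q : ℝ)
    (hq0 : 0 < q) (hq : q < 2 * m / (m + 1)) :
    ¬ ∃ C : ℝ, 0 < C ∧ ∀ n : ℕ, 1 ≤ n → ∀ a : (Fin n → ℕ) → ℂ,
        (∑ α ∈ Finset.Nat.antidiagonalTuple n m, ‖a α‖ ^ q) ^ (1 / q)
          ≤ C * polydiscSup n (fun z =>
              ∑ α ∈ Finset.Nat.antidiagonalTuple n m, a α * ∏ i, z i ^ α i) := by
  rintro ⟨C, hC, h⟩
  obtain ⟨k, rfl⟩ : ∃ k, m = k + 1 := ⟨m - 1, by omega⟩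
  push_cast at hq
  set ε : ℝ := ((k:ℝ)+1) / q - ((k:ℝ)+2) / 2 with hε
  have hε0 : 0 < ε := by
    rw [hε, sub_pos, div_lt_div_iff₀ two_pos hq0]
    have hd : (0:ℝ) < (k:ℝ) + 1 + 1 := by positivity
    have h2 : q * ((k:ℝ) + 1 + 1) < 2 * ((k:ℝ) + 1) := by
      have := (lt_div_iff₀ hd).mp hq
      linarith
    linarith
  obtain ⟨ν, hν⟩ := exists_nat_gt (max 1 (C ^ (1/ε)))
  have hνR : (1:ℝ) < (ν:ℝ) := lt_of_le_of_lt (le_max_left _ _) hν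
  have hν0 : ν ≠ 0 := by
    intro h0
    rw [h0] at hνR
    norm_num at hνR
  have hb0 : (0:ℝ) < (ν:ℝ) := by positivity
  obtain ⟨a, hlow, hsup⟩ := BHS.construction q k ν hν0
  have hN1 : 1 ≤ (k+1) * ν := Nat.one_le_iff_ne_zero.mpr (by positivity)
  have H := h ((k+1)*ν) hN1 a
  have h1 : (((ν:ℝ)^(k+1)) ^ (1/q) : ℝ)
      ≤ (∑ α ∈ Finset.Nat.antidiagonalTuple ((k+1)*ν) (k+1), ‖a α‖ ^ q) ^ (1/q) :=
    Real.rpow_le_rpow (by positivity) hlow (by positivity)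
  have h2 : C * polydiscSup ((k+1)*ν) (fun z =>
        ∑ α ∈ Finset.Nat.antidiagonalTuple ((k+1)*ν) (k+1), a α * ∏ i, z i ^ α i)
      ≤ C * Real.sqrt ((ν:ℝ)^(k+2)) :=
    mul_le_mul_of_nonneg_left hsup hC.le
  have key : (((ν:ℝ)^(k+1)) ^ (1/q) : ℝ) ≤ C * Real.sqrt ((ν:ℝ)^(k+2)) :=
    le_trans h1 (le_trans H h2)
  have lhs_eq : (((ν:ℝ)^(k+1) : ℝ)) ^ (1/q) = (ν:ℝ) ^ (((k:ℝ)+1)/q) := by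
    rw [← Real.rpow_natCast (ν:ℝ) (k+1), ← Real.rpow_mul hb0.le]
    push_cast
    ring_nf
  have rhs_eq : Real.sqrt ((ν:ℝ)^(k+2)) = (ν:ℝ) ^ (((k:ℝ)+2)/2) := by
    rw [Real.sqrt_eq_rpow, ← Real.rpow_natCast (ν:ℝ) (k+2), ← Real.rpow_mul hb0.le]
    push_cast
    ring_nf
  rw [lhs_eq, rhs_eq] at key
  have hfin : (ν:ℝ) ^ ε ≤ C := by
    have hpos : (0:ℝ) < (ν:ℝ) ^ (((k:ℝ)+2)/2) := Real.rpow_pos_of_pos hb0 _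
    rw [hε, Real.rpow_sub hb0, div_le_iff₀ hpos]
    exact key
  have hCν : C < (ν:ℝ) ^ ε := by
    have hCε : C = (C ^ (1/ε)) ^ ε := by
      rw [← Real.rpow_mul hC.le, one_div, inv_mul_cancel₀ hε0.ne', Real.rpow_one]
    rw [hCε]
    exact Real.rpow_lt_rpow (Real.rpow_nonneg hC.le _)
      (lt_of_le_of_lt (le_max_right _ _) hν) hε0
  linarith
end

section
/- (Sharpness of the multilinear Bohnenblust–Hille exponent) Let m ≥ 2 be an integer and let q be a real number with 0 < q < 2m/(m+1). Then there is no constant C > 0 such that for every positive integer n and every continuous m-linear form T : ℂ^n × ⋯ × ℂ^n → ℂ (each factor equipped with the sup norm) one has (∑_{i_1,…,i_m=1}^{n} |T(e_{i_1}, …, e_{i_m})|^q)^{1/q} ≤ C · sup { |T(z_1,…,z_m)| : z_1,…,z_m ∈ D̄^n }. -/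
/-- The supremum of `|T (z 1, …, z m)|` over `m`-tuples of points of the closed unit
polydisc in `ℂ^n`. -/
noncomputable def multilinearPolydiscSup (m n : ℕ)
    (T : ContinuousMultilinearMap ℂ (fun _ : Fin m => (Fin n → ℂ)) ℂ) : ℝ :=
  sSup ((fun z => ‖T z‖) ''
    {z : Fin m → (Fin n → ℂ) | ∀ k i, ‖z k i‖ ≤ 1})


noncomputable def bhOmega (n : ℕ) : ℂ := Complex.exp ((2 * Real.pi / n : ℝ) * Complex.I)

lemma bhOmega_abs (n : ℕ) : ‖bhOmega n‖ = 1 := Complex.norm_exp_ofReal_mul_I _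

lemma bhOmega_ne_zero (n : ℕ) : bhOmega n ≠ 0 := by
  intro h; have := bhOmega_abs n; rw [h] at this; simp at this

lemma bhOmega_pow_n {n : ℕ} (hn : 1 ≤ n) : bhOmega n ^ n = 1 := by
  rw [bhOmega, ← Complex.exp_nat_mul]
  have h : (n : ℂ) * (((2 * Real.pi / n : ℝ) : ℂ) * Complex.I) = (2 * Real.pi : ℝ) * Complex.I := by
    push_cast
    have : (n : ℂ) ≠ 0 := Nat.cast_ne_zero.mpr (by omega)
    field_simp
  rw [h]
  simpa using Complex.exp_int_mul_two_pi_mul_I 1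

lemma bhOmega_pow_inj {n : ℕ} (hn : 1 ≤ n) {a b : ℕ} (ha : a < n) (hb : b < n)
    (h : bhOmega n ^ a = bhOmega n ^ b) : a = b := by
  rw [bhOmega, ← Complex.exp_nat_mul, ← Complex.exp_nat_mul,
    Complex.exp_eq_exp_iff_exists_int] at h
  obtain ⟨k, hk⟩ := h
  have him := congrArg Complex.im hk
  simp [Complex.add_im, Complex.mul_im] at him
  have hn0 : (n:ℝ) ≠ 0 := Nat.cast_ne_zero.mpr (by omega)
  have hreal : (a : ℝ) = (b : ℝ) + (k : ℝ) * n := by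
    have hπ : (0:ℝ) < 2 * Real.pi := by positivity
    field_simp at him
    nlinarith [him, hπ]
  have hint : (a : ℤ) = (b : ℤ) + k * n := by exact_mod_cast hreal
  have h1 : (a : ℤ) - b = k * n := by linarith
  have hnpos : (0:ℤ) < n := by exact_mod_cast hn
  have hlt : k * n < 1 * n := by
    rw [one_mul, ← h1]; have : (a:ℤ) < n := by exact_mod_cast ha
    have : (0:ℤ) ≤ b := Int.natCast_nonneg b
    omega
  have hgt : (-1 : ℤ) * n < k * n := by
    rw [neg_one_mul, ← h1]
    have : (b:ℤ) < n := by exact_mod_cast hb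
    have : (0:ℤ) ≤ a := Int.natCast_nonneg a
    omega
  have hk1 : k < 1 := lt_of_mul_lt_mul_right (by linarith) (le_of_lt hnpos)
  have hk2 : -1 < k := lt_of_mul_lt_mul_right (by linarith) (le_of_lt hnpos)
  have : k = 0 := by omega
  subst this
  simp at hint
  omega

lemma bhOmega_conj_pow (n : ℕ) (e : ℕ) :
    (starRingEnd ℂ) (bhOmega n ^ e) = (bhOmega n ^ e)⁻¹ := by
  have h1 : ‖bhOmega n ^ e‖ = 1 := by
    rw [norm_pow, bhOmega_abs, one_pow]
  have := Complex.mul_conj (bhOmega n ^ e)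
  rw [Complex.normSq_eq_norm_sq, h1] at this
  field_simp [pow_ne_zero e (bhOmega_ne_zero n)]
  simpa using this

lemma bhOmega_orth {n : ℕ} (hn : 1 ≤ n) (a b : Fin n) :
    ∑ j : Fin n, bhOmega n ^ (a.val * j.val) * (starRingEnd ℂ) (bhOmega n ^ (b.val * j.val))
      = if a = b then (n : ℂ) else 0 := by
  set ζ : ℂ := bhOmega n ^ a.val * (bhOmega n ^ b.val)⁻¹ with hζ
  have hterm : ∀ j : Fin n,
      bhOmega n ^ (a.val * j.val) * (starRingEnd ℂ) (bhOmega n ^ (b.val * j.val)) = ζ ^ j.val := by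
    intro j
    rw [bhOmega_conj_pow, hζ, mul_pow, ← pow_mul, inv_pow, ← pow_mul]
  rw [Finset.sum_congr rfl (fun j _ => hterm j), Fin.sum_univ_eq_sum_range (fun j => ζ ^ j)]
  by_cases hab : a = b
  · subst hab
    have : ζ = 1 := by
      rw [hζ, mul_inv_cancel₀ (pow_ne_zero _ (bhOmega_ne_zero n))]
    simp [this]
  · rw [if_neg hab]
    have hζn : ζ ^ n = 1 := by
      have hωn := bhOmega_pow_n hn
      rw [hζ, mul_pow, ← pow_mul, mul_comm a.val n, pow_mul, hωn, one_pow, inv_pow,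
        ← pow_mul, mul_comm b.val n, pow_mul, hωn, one_pow, inv_one, mul_one]
    have hζ1 : ζ ≠ 1 := by
      intro h1
      apply hab
      have : bhOmega n ^ a.val = bhOmega n ^ b.val := by
        have hb0 : (bhOmega n ^ b.val) ≠ 0 := pow_ne_zero _ (bhOmega_ne_zero n)
        rw [hζ, mul_inv_eq_one₀ hb0] at h1
        exact h1
      exact Fin.ext (bhOmega_pow_inj hn a.isLt b.isLt this)
    rw [geom_sum_eq hζ1, hζn, sub_self, zero_div]

lemma bh_parseval {n : ℕ} (hn : 1 ≤ n) (v : Fin n → ℂ) :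
    ∑ j : Fin n, Complex.normSq (∑ i : Fin n, bhOmega n ^ (i.val * j.val) * v i)
      = n * ∑ i : Fin n, Complex.normSq (v i) := by
  have key : ∑ j : Fin n, ((Complex.normSq (∑ i : Fin n, bhOmega n ^ (i.val * j.val) * v i) : ℂ))
      = (n : ℂ) * ∑ i : Fin n, (Complex.normSq (v i) : ℂ) := by
    calc ∑ j : Fin n, ((Complex.normSq (∑ i : Fin n, bhOmega n ^ (i.val * j.val) * v i) : ℂ))
        = ∑ j : Fin n, (∑ i : Fin n, bhOmega n ^ (i.val * j.val) * v i) *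
            (∑ i' : Fin n, (starRingEnd ℂ) (bhOmega n ^ (i'.val * j.val)) * (starRingEnd ℂ) (v i')) := by
          refine Finset.sum_congr rfl fun j _ => ?_
          rw [← Complex.mul_conj, map_sum]
          simp only [map_mul]
      _ = ∑ i : Fin n, ∑ i' : Fin n, (v i * (starRingEnd ℂ) (v i')) *
            ∑ j : Fin n, bhOmega n ^ (i.val * j.val) * (starRingEnd ℂ) (bhOmega n ^ (i'.val * j.val)) := by
          have e1 : ∀ j : Fin n, (∑ i : Fin n, bhOmega n ^ (i.val * j.val) * v i) *
              (∑ i' : Fin n, (starRingEnd ℂ) (bhOmega n ^ (i'.val * j.val)) * (starRingEnd ℂ) (v i'))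
              = ∑ i : Fin n, ∑ i' : Fin n, (bhOmega n ^ (i.val * j.val) * v i) *
                ((starRingEnd ℂ) (bhOmega n ^ (i'.val * j.val)) * (starRingEnd ℂ) (v i')) :=
            fun j => Finset.sum_mul_sum _ _ _ _
          rw [Finset.sum_congr rfl fun j _ => e1 j, Finset.sum_comm]
          refine Finset.sum_congr rfl fun i _ => ?_
          rw [Finset.sum_comm]
          refine Finset.sum_congr rfl fun i' _ => ?_
          rw [Finset.mul_sum]
          refine Finset.sum_congr rfl fun j _ => ?_
          ring
      _ = (n : ℂ) * ∑ i : Fin n, (Complex.normSq (v i) : ℂ) := by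
          rw [Finset.mul_sum]
          refine Finset.sum_congr rfl fun i _ => ?_
          rw [Finset.sum_congr rfl (fun i' _ => by rw [bhOmega_orth hn i i'])]
          have hsplit : ∀ i' : Fin n, v i * (starRingEnd ℂ) (v i') * (if i = i' then (n:ℂ) else 0)
              = if i = i' then v i * (starRingEnd ℂ) (v i') * n else 0 := by
            intro i'; split <;> simp
          rw [Finset.sum_congr rfl fun i' _ => hsplit i', Finset.sum_ite_eq]
          simp [Complex.mul_conj]
          ring
  have := congrArg Complex.re key
  push_cast at this
  simpa using this

noncomputable def bhW (n : ℕ) (z : ℕ → Fin n → ℂ) : ℕ → Fin n → ℂ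
  | 0 => z 0
  | (t+1) => fun j => z (t+1) j * ∑ i : Fin n, bhOmega n ^ (i.val * j.val) * bhW n z t i

lemma bhW_normSq_le {n : ℕ} (hn : 1 ≤ n) (z : ℕ → Fin n → ℂ)
    (hz : ∀ k j, ‖z k j‖ ≤ 1) (t : ℕ) :
    ∑ j : Fin n, Complex.normSq (bhW n z t j) ≤ (n : ℝ) ^ (t + 1) := by
  have hzsq : ∀ k j, Complex.normSq (z k j) ≤ 1 := by
    intro k j
    rw [Complex.normSq_eq_norm_sq]
    exact pow_le_one₀ (norm_nonneg _) (hz k j)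
  induction t with
  | zero =>
    calc ∑ j : Fin n, Complex.normSq (bhW n z 0 j) ≤ ∑ _j : Fin n, (1:ℝ) :=
          Finset.sum_le_sum fun j _ => hzsq 0 j
      _ = n := by simp
      _ = (n:ℝ) ^ (0 + 1) := by simp
  | succ t ih =>
    calc ∑ j : Fin n, Complex.normSq (bhW n z (t+1) j)
        = ∑ j : Fin n, Complex.normSq (z (t+1) j) *
            Complex.normSq (∑ i : Fin n, bhOmega n ^ (i.val * j.val) * bhW n z t i) := by
          refine Finset.sum_congr rfl fun j _ => ?_
          simp [bhW, Complex.normSq_mul]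
      _ ≤ ∑ j : Fin n, Complex.normSq (∑ i : Fin n, bhOmega n ^ (i.val * j.val) * bhW n z t i) := by
          refine Finset.sum_le_sum fun j _ => ?_
          have h1 := hzsq (t+1) j
          have h2 : 0 ≤ Complex.normSq (∑ i : Fin n, bhOmega n ^ (i.val * j.val) * bhW n z t i) :=
            Complex.normSq_nonneg _
          nlinarith
      _ = n * ∑ i : Fin n, Complex.normSq (bhW n z t i) := bh_parseval hn _
      _ ≤ n * (n:ℝ) ^ (t+1) := by
          have : (0:ℝ) ≤ n := Nat.cast_nonneg n
          exact mul_le_mul_of_nonneg_left ih this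
      _ = (n:ℝ) ^ (t+1+1) := by ring

lemma bhSum_eq {n : ℕ} (z : ℕ → Fin n → ℂ) : ∀ t : ℕ, ∀ f : Fin n → ℂ,
    ∑ i : Fin (t+1) → Fin n,
      (∏ k : Fin t, bhOmega n ^ ((i k.castSucc).val * (i k.succ).val)) *
        (∏ k : Fin (t+1), z k (i k)) * f (i (Fin.last t))
    = ∑ j : Fin n, bhW n z t j * f j := by
  intro t
  induction t with
  | zero =>
    intro f
    apply Fintype.sum_equiv (Equiv.funUnique (Fin 1) (Fin n))
    intro i
    simp [bhW, Fin.last]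
  | succ t ih =>
    intro f
    rw [← Equiv.sum_comp (Fin.snocEquiv (fun _ : Fin (t+2) => Fin n)), Fintype.sum_prod_type]
    have key : ∀ a : Fin n, ∀ i' : Fin (t+1) → Fin n,
        (∏ k : Fin (t+1), bhOmega n ^
            (((Fin.snoc i' a : Fin (t+2) → Fin n) k.castSucc).val *
             ((Fin.snoc i' a : Fin (t+2) → Fin n) k.succ).val)) *
          (∏ k : Fin (t+2), z k ((Fin.snoc i' a : Fin (t+2) → Fin n) k)) *
          f ((Fin.snoc i' a : Fin (t+2) → Fin n) (Fin.last (t+1)))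
        = (∏ k : Fin t, bhOmega n ^ ((i' k.castSucc).val * (i' k.succ).val)) *
          (∏ k : Fin (t+1), z k (i' k)) *
          (bhOmega n ^ ((i' (Fin.last t)).val * a.val) * (z (t+1) a * f a)) := by
      intro a i'
      rw [Fin.prod_univ_castSucc (fun k : Fin (t+1) => bhOmega n ^
            (((Fin.snoc i' a : Fin (t+2) → Fin n) k.castSucc).val *
             ((Fin.snoc i' a : Fin (t+2) → Fin n) k.succ).val)),
          Fin.prod_univ_castSucc (fun k : Fin (t+2) => z k ((Fin.snoc i' a : Fin (t+2) → Fin n) k))]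
      simp only [Fin.succ_castSucc, Fin.snoc_castSucc, Fin.snoc_last, Fin.succ_last,
        Fin.coe_castSucc, Fin.val_last]
      ring
    calc ∑ a : Fin n, ∑ i' : Fin (t+1) → Fin n,
          (∏ k : Fin (t+1), bhOmega n ^
              ((Fin.snocEquiv (fun _ : Fin (t+2) => Fin n) (a, i') k.castSucc).val *
               (Fin.snocEquiv (fun _ : Fin (t+2) => Fin n) (a, i') k.succ).val)) *
            (∏ k : Fin (t+2), z k (Fin.snocEquiv (fun _ : Fin (t+2) => Fin n) (a, i') k)) *
            f (Fin.snocEquiv (fun _ : Fin (t+2) => Fin n) (a, i') (Fin.last (t+1)))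
        = ∑ a : Fin n, ∑ j : Fin n, bhW n z t j *
            (bhOmega n ^ (j.val * a.val) * (z (t+1) a * f a)) := by
          refine Finset.sum_congr rfl fun a _ => ?_
          rw [← ih (fun j => bhOmega n ^ (j.val * a.val) * (z (t+1) a * f a))]
          refine Finset.sum_congr rfl fun i' _ => ?_
          have := key a i'
          simpa [Fin.snocEquiv] using this
      _ = ∑ a : Fin n, bhW n z (t+1) a * f a := by
          refine Finset.sum_congr rfl fun a _ => ?_
          simp only [bhW, Finset.mul_sum, Finset.sum_mul]
          refine Finset.sum_congr rfl fun j _ => ?_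
          ring

lemma bh_abs_sum_le {n : ℕ} (hn : 1 ≤ n) (t : ℕ) (z : ℕ → Fin n → ℂ)
    (hz : ∀ k j, ‖z k j‖ ≤ 1) :
    ‖∑ i : Fin (t+1) → Fin n,
      (∏ k : Fin t, bhOmega n ^ ((i k.castSucc).val * (i k.succ).val)) *
        ∏ k : Fin (t+1), z k (i k)‖
    ≤ Real.sqrt ((n:ℝ) ^ (t + 2)) := by
  have h1 : (∑ i : Fin (t+1) → Fin n,
      (∏ k : Fin t, bhOmega n ^ ((i k.castSucc).val * (i k.succ).val)) *
        ∏ k : Fin (t+1), z k (i k)) = ∑ j : Fin n, bhW n z t j := by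
    have := bhSum_eq z t (fun _ => 1)
    simpa using this
  rw [h1]
  have h2 : ∑ j : Fin n, ‖bhW n z t j‖ ≤ Real.sqrt ((n:ℝ) ^ (t + 2)) := by
    rw [Real.le_sqrt (Finset.sum_nonneg fun j _ => norm_nonneg _) (by positivity)]
    have hcs := sq_sum_le_card_mul_sum_sq (s := (Finset.univ : Finset (Fin n)))
      (f := fun j => ‖bhW n z t j‖)
    have hb : ∑ j : Fin n, ‖bhW n z t j‖ ^ 2 ≤ (n:ℝ) ^ (t + 1) := by
      have := bhW_normSq_le hn z hz t
      calc ∑ j : Fin n, ‖bhW n z t j‖ ^ 2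
          = ∑ j : Fin n, Complex.normSq (bhW n z t j) := by
            refine Finset.sum_congr rfl fun j _ => ?_
            rw [Complex.sq_norm]
        _ ≤ (n:ℝ) ^ (t + 1) := this
    calc (∑ j : Fin n, ‖bhW n z t j‖) ^ 2
        ≤ (n : ℝ) * ∑ j : Fin n, ‖bhW n z t j‖ ^ 2 := by simpa using hcs
      _ ≤ (n : ℝ) * (n:ℝ) ^ (t + 1) := mul_le_mul_of_nonneg_left hb (Nat.cast_nonneg n)
      _ = (n:ℝ) ^ (t + 2) := by ring
  exact le_trans (norm_sum_le _ _) h2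

/-- **Sharpness of the multilinear Bohnenblust–Hille exponent.** For `m ≥ 2` and
`0 < q < 2m/(m+1)`, there is no constant `C > 0` such that for every `n ≥ 1` and every
continuous `m`-linear form `T : ℂ^n × ⋯ × ℂ^n → ℂ` (sup norm on each factor) one has
`(∑_{i₁,…,i_m} |T (e_{i₁}, …, e_{i_m})| ^ q) ^ (1/q) ≤ C * sup_{z ∈ (D̄^n)^m} |T z|`. -/
theorem multilinear_bohnenblust_hille_sharp (m : ℕ) (hm : 2 ≤ m) (q : ℝ)
    (hq0 : 0 < q) (hq : q < 2 * m / (m + 1)) :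
    ¬ ∃ C : ℝ, 0 < C ∧ ∀ n : ℕ, 1 ≤ n →
        ∀ T : ContinuousMultilinearMap ℂ (fun _ : Fin m => (Fin n → ℂ)) ℂ,
          (∑ i : Fin m → Fin n,
              ‖T (fun k => Pi.single (i k) 1)‖ ^ q) ^ (1 / q)
            ≤ C * multilinearPolydiscSup m n T := by
  rintro ⟨C, hC, h⟩
  obtain ⟨t, rfl⟩ : ∃ t, m = t + 1 := ⟨m - 1, by omega⟩
  -- exponent gap
  have hq' : q * ((t:ℝ) + 2) < 2 * ((t:ℝ) + 1) := by
    have h2 : (0:ℝ) < (t:ℝ) + 1 + 1 := by positivity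
    have hq2 : q < 2 * ((t:ℝ)+1) / ((t:ℝ)+1+1) := by push_cast at hq; exact hq
    have h3 := (lt_div_iff₀ h2).mp hq2
    linarith
  set α : ℝ := ((t:ℝ) + 1) / q - ((t:ℝ) + 2) / 2 with hα_def
  have hα : 0 < α := by
    have : ((t:ℝ) + 2) / 2 < ((t:ℝ) + 1) / q := by
      rw [div_lt_div_iff₀ (by norm_num) hq0]
      nlinarith
    simpa [hα_def] using sub_pos.mpr this
  -- the key inequality for every n ≥ 1
  have H : ∀ n : ℕ, 1 ≤ n → ((n:ℝ)) ^ α ≤ C := by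
    intro n hn
    set a : (Fin (t+1) → Fin n) → ℂ :=
      fun i => ∏ k : Fin t, bhOmega n ^ ((i k.castSucc).val * (i k.succ).val) with ha_def
    set T : ContinuousMultilinearMap ℂ (fun _ : Fin (t+1) => (Fin n → ℂ)) ℂ :=
      ∑ i : Fin (t+1) → Fin n, a i •
        (ContinuousMultilinearMap.mkPiAlgebra ℂ (Fin (t+1)) ℂ).compContinuousLinearMap
          (fun k => ContinuousLinearMap.proj (i k)) with hT_def
    have hTapply : ∀ z : Fin (t+1) → (Fin n → ℂ),
        T z = ∑ i : Fin (t+1) → Fin n, a i * ∏ k : Fin (t+1), z k (i k) := by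
      intro z
      rw [hT_def, ContinuousMultilinearMap.sum_apply]
      refine Finset.sum_congr rfl fun i _ => ?_
      simp [smul_eq_mul]
    -- coefficients
    have hcoef : ∀ j : Fin (t+1) → Fin n, T (fun k => Pi.single (j k) 1) = a j := by
      intro j
      rw [hTapply]
      have hprod : ∀ i : Fin (t+1) → Fin n,
          (∏ k : Fin (t+1), (Pi.single (j k) 1 : Fin n → ℂ) (i k)) = (if i = j then (1:ℂ) else 0) := by
        intro i
        by_cases hij : i = j
        · subst hij; simp
        · rw [if_neg hij]
          obtain ⟨k, hk⟩ := Function.ne_iff.mp hij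
          exact Finset.prod_eq_zero (Finset.mem_univ k)
            (by simp [Pi.single_apply, hk])
      calc ∑ i : Fin (t+1) → Fin n, a i * ∏ k : Fin (t+1), (Pi.single (j k) 1 : Fin n → ℂ) (i k)
          = ∑ i : Fin (t+1) → Fin n, if i = j then a i else 0 := by
            refine Finset.sum_congr rfl fun i _ => ?_
            rw [hprod i]
            split <;> simp
        _ = a j := by rw [Finset.sum_ite_eq' Finset.univ j a]; simp
    have habs : ∀ j : Fin (t+1) → Fin n, ‖a j‖ = 1 := by
      intro j
      rw [ha_def]
      rw [norm_prod]
      refine Finset.prod_eq_one fun k _ => ?_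
      rw [norm_pow, bhOmega_abs, one_pow]
    -- LHS value
    have hLHS : (∑ i : Fin (t+1) → Fin n,
        ‖T (fun k => Pi.single (i k) 1)‖ ^ q) ^ (1 / q)
        = ((n:ℝ) ^ (t+1)) ^ (1/q) := by
      have : ∀ i : Fin (t+1) → Fin n,
          ‖T (fun k => Pi.single (i k) 1)‖ ^ q = 1 := by
        intro i
        rw [hcoef i, habs i, Real.one_rpow]
      rw [Finset.sum_congr rfl fun i _ => this i]
      simp [Fintype.card_fun]
    -- sup bound
    have hsup : multilinearPolydiscSup (t+1) n T ≤ Real.sqrt ((n:ℝ) ^ (t+2)) := by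
      apply Real.sSup_le
      · rintro x ⟨zz, hzz, rfl⟩
        simp only [Set.mem_setOf_eq] at hzz
        set zext : ℕ → Fin n → ℂ := fun k => if hk : k < t+1 then zz ⟨k, hk⟩ else 0 with hzext_def
        have hzext : ∀ k j, ‖zext k j‖ ≤ 1 := by
          intro k j
          rw [hzext_def]
          by_cases hk : k < t + 1
          · simp only [dif_pos hk]; exact hzz ⟨k, hk⟩ j
          · simp only [dif_neg hk]; simp
        have hmatch : ∀ i : Fin (t+1) → Fin n, (∏ k : Fin (t+1), zz k (i k))
            = ∏ k : Fin (t+1), zext (k : ℕ) (i k) := by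
          intro i
          refine Finset.prod_congr rfl fun k _ => ?_
          rw [hzext_def]
          simp [k.isLt]
        show ‖T zz‖ ≤ Real.sqrt ((n:ℝ) ^ (t+2))
        rw [hTapply]
        calc ‖∑ i : Fin (t+1) → Fin n, a i * ∏ k : Fin (t+1), zz k (i k)‖
            = ‖∑ i : Fin (t+1) → Fin n,
                (∏ k : Fin t, bhOmega n ^ ((i k.castSucc).val * (i k.succ).val)) *
                  ∏ k : Fin (t+1), zext (k : ℕ) (i k)‖ := by
              congr 1
              exact Finset.sum_congr rfl fun i _ => by rw [ha_def, hmatch i]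
          _ ≤ Real.sqrt ((n:ℝ) ^ (t + 2)) := bh_abs_sum_le hn t zext hzext
      · exact Real.sqrt_nonneg _
    -- combine
    have hineq := h n hn T
    rw [hLHS] at hineq
    have hineq2 : ((n:ℝ) ^ (t+1)) ^ (1/q) ≤ C * Real.sqrt ((n:ℝ) ^ (t+2)) :=
      le_trans hineq (by
        have := mul_le_mul_of_nonneg_left hsup (le_of_lt hC)
        exact this)
    -- convert to rpow
    have hnpos : (0:ℝ) < (n:ℝ) := by exact_mod_cast hn
    have hL : ((n:ℝ) ^ (t+1)) ^ (1/q) = (n:ℝ) ^ (((t:ℝ)+1) / q) := by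
      rw [← Real.rpow_natCast (n:ℝ) (t+1), ← Real.rpow_mul (le_of_lt hnpos)]
      push_cast
      ring_nf
    have hR : Real.sqrt ((n:ℝ) ^ (t+2)) = (n:ℝ) ^ (((t:ℝ)+2) / 2) := by
      rw [Real.sqrt_eq_rpow, ← Real.rpow_natCast (n:ℝ) (t+2), ← Real.rpow_mul (le_of_lt hnpos)]
      push_cast
      ring_nf
    rw [hL, hR] at hineq2
    have hsplit : (n:ℝ) ^ (((t:ℝ)+1) / q) = (n:ℝ) ^ α * (n:ℝ) ^ (((t:ℝ)+2) / 2) := by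
      rw [← Real.rpow_add hnpos, hα_def]
      ring_nf
    rw [hsplit] at hineq2
    have hposR : 0 < (n:ℝ) ^ (((t:ℝ)+2) / 2) := Real.rpow_pos_of_pos hnpos _
    exact le_of_mul_le_mul_right hineq2 hposR
  -- contradiction: pick n large
  obtain ⟨N, hN⟩ := exists_nat_gt (max 1 ((C+1) ^ (1/α)))
  have hN1 : 1 ≤ N := by
    have : (1:ℝ) < N := lt_of_le_of_lt (le_max_left _ _) hN
    exact_mod_cast this.le
  have hNb : (C+1) ^ (1/α) < (N:ℝ) := lt_of_le_of_lt (le_max_right _ _) hN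
  have hCpos : (0:ℝ) < C + 1 := by linarith
  have hbase : (0:ℝ) ≤ (C+1) ^ (1/α) := Real.rpow_nonneg (le_of_lt hCpos) _
  have hmono : ((C+1) ^ (1/α)) ^ α < (N:ℝ) ^ α := Real.rpow_lt_rpow hbase hNb hα
  have hsimp : ((C+1) ^ (1/α)) ^ α = C + 1 := by
    rw [← Real.rpow_mul (le_of_lt hCpos), one_div, inv_mul_cancel₀ (ne_of_gt hα), Real.rpow_one]
  rw [hsimp] at hmono
  have := H N hN1
  linarith
end

section
/- (Multilinear Bohnenblust–Hille implies polynomial Bohnenblust–Hille) Let m be a positive integer and q > 0. Suppose there exists a constant C > 0 such that for every positive integer n and every continuous m-linear form T : ℂ^n × ⋯ × ℂ^n → ℂ (with each factor carrying the sup norm) one has (∑_{i_1,…,i_m=1}^{n} |T(e_{i_1},…,e_{i_m})|^q)^{1/q} ≤ C · sup { |T(z_1,…,z_m)| : z_1,…,z_m ∈ D̄^n }. Then there exists a constant C' > 0 such that for every positive integer n and every m-homogeneous polynomial P(z) = ∑_{|α|=m} a_α z^α on ℂ^n one has (∑_{|α|=m} |a_α|^q)^{1/q} ≤ C' · sup_{z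 ∈ D̄^n} |P(z)|. -/
namespace BHaux

variable {m r : ℕ}

/-- The number of positions at which the tuple `i` takes the value `j`. -/
def cnt (i : Fin m → Fin r) (j : Fin r) : ℕ := (Finset.univ.filter fun k => i k = j).card

lemma cnt_eq_count (i : Fin m → Fin r) (j : Fin r) :
    cnt i j = Multiset.count j (Finset.univ.val.map i) := by
  rw [Multiset.count_map, cnt, ← Finset.filter_val]
  simp [Finset.card, eq_comm]

lemma sum_cnt (i : Fin m → Fin r) : ∑ j, cnt i j = m := by
  have h := Finset.card_eq_sum_card_fiberwise (f := i) (s := Finset.univ)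
    (t := Finset.univ) (fun k _ => Finset.mem_univ _)
  simpa [cnt, Finset.card_univ] using h.symm

lemma cnt_comp_perm (i : Fin m → Fin r) (σ : Equiv.Perm (Fin m)) : cnt (i ∘ σ) = cnt i := by
  funext j
  simp only [cnt_eq_count, Fin.univ_val_map]
  rw [Multiset.coe_eq_coe.mpr (σ.ofFn_comp_perm i)]

lemma exists_comp_perm_eq {i i' : Fin m → Fin r} (h : cnt i = cnt i') :
    ∃ σ : Equiv.Perm (Fin m), i ∘ σ = i' := by
  have hms : (List.ofFn i : Multiset (Fin r)) = (List.ofFn i' : Multiset (Fin r)) := by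
    rw [← Fin.univ_val_map, ← Fin.univ_val_map]
    ext j
    rw [← cnt_eq_count, ← cnt_eq_count, h]
  have hperm : (List.ofFn i).Perm (List.ofFn i') := Multiset.coe_eq_coe.mp hms
  set σ₁ := Tuple.sort i
  set σ₂ := Tuple.sort i'
  have h1 : (List.ofFn (i ∘ σ₁)).Perm (List.ofFn (i' ∘ σ₂)) :=
    ((σ₁.ofFn_comp_perm i).trans hperm).trans (σ₂.ofFn_comp_perm i').symm
  have heq : i ∘ σ₁ = i' ∘ σ₂ := by
    have := List.Perm.eq_of_sortedLE
      ((Tuple.monotone_sort i).sortedLE_ofFn) ((Tuple.monotone_sort i').sortedLE_ofFn) h1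
    exact List.ofFn_injective this
  refine ⟨σ₂.symm.trans σ₁, ?_⟩
  funext k
  have := congrFun heq (σ₂.symm k)
  simpa using this

lemma exists_cnt_eq {n : ℕ} (α : Fin n → ℕ) (hα : ∑ j, α j = m) :
    ∃ i : Fin m → Fin n, cnt i = α := by
  classical
  set L : List (Fin n) := (List.finRange n).flatMap (fun j => List.replicate (α j) j) with hL
  have hlen : L.length = m := by
    rw [hL, List.length_flatMap]
    simp only [Function.comp_def, List.length_replicate]
    rw [← Fin.sum_univ_def]
    exact hα
  refine ⟨fun k => L.get (Fin.cast hlen.symm k), ?_⟩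
  funext j
  have hof : List.ofFn (fun k : Fin m => L.get (Fin.cast hlen.symm k)) = L := by
    apply List.ext_getElem
    · simp [hlen]
    · intro t h1 h2
      simp [List.getElem_ofFn]
  rw [cnt_eq_count, Fin.univ_val_map, hof]
  have : Multiset.count j ↑L = L.count j := by simp [List.count]
  rw [this, hL, List.count_flatMap]
  simp only [Function.comp_def]
  have : ∀ j' : Fin n, (List.replicate (α j') j').count j = if j' = j then α j else 0 := by
    intro j'
    rw [List.count_replicate]
    split <;> simp_all
  simp only [this]
  rw [← Fin.sum_univ_def]
  simp

lemma card_fiber_le {n : ℕ} (α : Fin n → ℕ) :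
    (Finset.univ.filter fun i : Fin m → Fin n => cnt i = α).card ≤ m.factorial := by
  classical
  rcases Finset.eq_empty_or_nonempty
    (Finset.univ.filter fun i : Fin m → Fin n => cnt i = α) with h | ⟨i₀, hi₀⟩
  · rw [h]; exact Nat.zero_le _
  · have hi₀' : cnt i₀ = α := (Finset.mem_filter.mp hi₀).2
    have hsub : (Finset.univ.filter fun i : Fin m → Fin n => cnt i = α)
        ⊆ Finset.univ.image (fun σ : Equiv.Perm (Fin m) => i₀ ∘ ⇑σ) := by
      intro i hi
      obtain ⟨σ, hσ⟩ := exists_comp_perm_eq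
        (show cnt i₀ = cnt i by rw [hi₀', (Finset.mem_filter.mp hi).2])
      exact Finset.mem_image.mpr ⟨σ, Finset.mem_univ _, hσ⟩
    calc (Finset.univ.filter fun i : Fin m → Fin n => cnt i = α).card
        ≤ (Finset.univ.image (fun σ : Equiv.Perm (Fin m) => i₀ ∘ ⇑σ)).card :=
          Finset.card_le_card hsub
      _ ≤ (Finset.univ : Finset (Equiv.Perm (Fin m))).card := Finset.card_image_le
      _ = m.factorial := by rw [Finset.card_univ, Fintype.card_perm, Fintype.card_fin]

/-- signs indexed by booleans -/
def sgn (b : Bool) : ℂ := if b then 1 else -1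

lemma abs_sgn (b : Bool) : ‖sgn b‖ = 1 := by
  cases b <;> simp [sgn]

lemma sum_sgn_pow (e : ℕ) : ∑ b : Bool, sgn b ^ e = if Even e then 2 else 0 := by
  rw [Fintype.sum_bool]
  have h1 : sgn true = 1 := rfl
  have h2 : sgn false = -1 := rfl
  rw [h1, h2, one_pow]
  rcases Nat.even_or_odd e with he | he
  · rw [he.neg_one_pow, if_pos he]; norm_num
  · rw [he.neg_one_pow, if_neg (by simpa [Nat.not_even_iff_odd] using he)]; ring

lemma prod_comp_cnt {n : ℕ} (g : Fin n → ℂ) (i : Fin m → Fin n) :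
    ∏ k, g (i k) = ∏ j, g j ^ cnt i j := by
  rw [← Finset.prod_fiberwise_of_maps_to (g := i) (fun k _ => Finset.mem_univ _)
    (fun k => g (i k))]
  refine Finset.prod_congr rfl fun j _ => ?_
  rw [cnt, ← Finset.prod_const]
  exact Finset.prod_congr rfl fun k hk => by
    rw [(Finset.mem_filter.mp hk).2]

lemma cnt_of_bijective {f : Fin m → Fin m} (hf : Function.Bijective f) (j : Fin m) :
    cnt f j = 1 := by
  let e := Equiv.ofBijective f hf
  have : (Finset.univ.filter fun k => f k = j) = {e.symm j} := by
    ext k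
    simp only [Finset.mem_filter, Finset.mem_univ, true_and, Finset.mem_singleton]
    constructor
    · intro h; exact (Equiv.eq_symm_apply e).mpr h
    · rintro rfl; exact e.apply_symm_apply j
  rw [cnt, this, Finset.card_singleton]

lemma signSum (f : Fin m → Fin m) :
    ∑ ε : Fin m → Bool, (∏ k, sgn (ε k)) * ∏ k, sgn (ε (f k)) =
      if Function.Bijective f then (2 : ℂ) ^ m else 0 := by
  have key : ∀ ε : Fin m → Bool,
      (∏ k, sgn (ε k)) * ∏ k, sgn (ε (f k)) = ∏ j, sgn (ε j) ^ (1 + cnt f j) := by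
    intro ε
    rw [prod_comp_cnt (fun j => sgn (ε j)) f, ← Finset.prod_mul_distrib]
    exact Finset.prod_congr rfl fun j _ => by rw [pow_add, pow_one]
  simp only [key]
  have swap : ∑ ε : Fin m → Bool, ∏ j, sgn (ε j) ^ (1 + cnt f j)
      = ∏ j, ∑ b : Bool, sgn b ^ (1 + cnt f j) := by
    rw [Finset.prod_univ_sum]
    rw [Fintype.piFinset_univ]
  rw [swap]
  simp only [sum_sgn_pow]
  by_cases hf : Function.Bijective f
  · rw [if_pos hf]
    have hfac : ∀ j ∈ Finset.univ, (if Even (1 + cnt f j) then (2:ℂ) else 0) = 2 :=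
      fun j _ => by rw [cnt_of_bijective hf j]; norm_num
    rw [Finset.prod_congr rfl hfac, Finset.prod_const, Finset.card_univ, Fintype.card_fin]
  · rw [if_neg hf]
    have : ∃ j, ¬ Odd (cnt f j) := by
      by_contra hodd
      push_neg at hodd
      have h1 : ∀ j ∈ Finset.univ, 1 ≤ cnt f j := fun j _ => (hodd j).pos
      have hsum : ∑ j, cnt f j = ∑ j : Fin m, 1 := by
        rw [sum_cnt]; simp
      have hall : ∀ j ∈ Finset.univ, cnt f j = 1 := by
        intro j hj
        by_contra hne
        have hlt : 1 < cnt f j := lt_of_le_of_ne (h1 j hj) (Ne.symm hne)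
        have : ∑ j : Fin m, 1 < ∑ j, cnt f j :=
          Finset.sum_lt_sum (fun i hi => h1 i hi) ⟨j, Finset.mem_univ j, hlt⟩
        omega
      apply hf
      rw [Fintype.bijective_iff_injective_and_card]
      refine ⟨fun k k' hkk' => ?_, rfl⟩
      have hk : k ∈ Finset.univ.filter fun t => f t = f k' := by simp [hkk']
      have hk' : k' ∈ Finset.univ.filter fun t => f t = f k' := by simp
      exact Finset.card_le_one.mp (le_of_eq (hall (f k') (Finset.mem_univ _))) k hk k' hk'
    obtain ⟨j, hj⟩ := this
    refine Finset.prod_eq_zero (Finset.mem_univ j) ?_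
    have : ¬ Even (1 + cnt f j) := by
      rw [add_comm, Nat.even_add_one]
      exact not_not.mpr (Nat.not_odd_iff_even.mp hj)
    simp [this]

lemma sum_comm3 {A B C M : Type*} [Fintype A] [Fintype B] [Fintype C] [AddCommMonoid M]
    (g : A → B → C → M) :
    ∑ a : A, ∑ b : B, ∑ c : C, g a b c = ∑ c : C, ∑ b : B, ∑ a : A, g a b c :=
  calc ∑ a : A, ∑ b : B, ∑ c : C, g a b c
      = ∑ a : A, ∑ c : C, ∑ b : B, g a b c :=
        Finset.sum_congr rfl fun _ _ => Finset.sum_comm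
    _ = ∑ c : C, ∑ a : A, ∑ b : B, g a b c := Finset.sum_comm
    _ = ∑ c : C, ∑ b : B, ∑ a : A, g a b c :=
        Finset.sum_congr rfl fun _ _ => Finset.sum_comm

lemma reindex_perm {n : ℕ} (c : (Fin m → Fin n) → ℂ)
    (hc : ∀ (i : Fin m → Fin n) (σ : Equiv.Perm (Fin m)), c (i ∘ σ) = c i)
    (x : Fin m → Fin n → ℂ) (σ : Equiv.Perm (Fin m)) :
    ∑ i : Fin m → Fin n, c i * ∏ k, x (σ k) (i k)
      = ∑ i : Fin m → Fin n, c i * ∏ k, x k (i k) := by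
  have he : Function.Bijective (fun i : Fin m → Fin n => i ∘ ⇑σ.symm) := by
    refine Function.bijective_iff_has_inverse.mpr ⟨fun i => i ∘ ⇑σ, fun i => ?_, fun i => ?_⟩ <;>
      · funext k; simp
  refine Fintype.sum_bijective _ he _ _ (fun i => ?_)
  show c i * ∏ k, x (σ k) (i k) = c (i ∘ ⇑σ.symm) * ∏ k, x k ((i ∘ ⇑σ.symm) k)
  rw [hc i σ.symm]
  congr 1
  have h2 := Equiv.prod_comp σ (fun k => x k (i (σ.symm k)))
  simp only [Equiv.symm_apply_apply] at h2
  rw [show (∏ k, x k ((i ∘ ⇑σ.symm) k)) = ∏ k, x k (i (σ.symm k)) from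
    Finset.prod_congr rfl fun k _ => rfl, ← h2]

lemma polarization (n : ℕ) (c : (Fin m → Fin n) → ℂ)
    (hc : ∀ (i : Fin m → Fin n) (σ : Equiv.Perm (Fin m)), c (i ∘ σ) = c i)
    (x : Fin m → Fin n → ℂ) :
    ∑ ε : Fin m → Bool, (∏ k, sgn (ε k)) *
        (∑ i : Fin m → Fin n, c i * ∏ k, (∑ j, sgn (ε j) * x j (i k)))
      = (2:ℂ)^m * (m.factorial : ℂ) * ∑ i : Fin m → Fin n, c i * ∏ k, x k (i k) := by
  classical
  have expand : ∀ (ε : Fin m → Bool) (i : Fin m → Fin n),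
      ∏ k, (∑ j, sgn (ε j) * x j (i k))
        = ∑ f : Fin m → Fin m, (∏ k, sgn (ε (f k))) * ∏ k, x (f k) (i k) := by
    intro ε i
    rw [Finset.prod_univ_sum (fun _ => Finset.univ) (fun k j => sgn (ε j) * x j (i k))]
    rw [Fintype.piFinset_univ]
    exact Finset.sum_congr rfl fun f _ => by rw [Finset.prod_mul_distrib]
  calc ∑ ε : Fin m → Bool, (∏ k, sgn (ε k)) *
        (∑ i : Fin m → Fin n, c i * ∏ k, (∑ j, sgn (ε j) * x j (i k)))
      = ∑ ε : Fin m → Bool, ∑ i : Fin m → Fin n, ∑ f : Fin m → Fin m,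
          (c i * ∏ k, x (f k) (i k)) * ((∏ k, sgn (ε k)) * ∏ k, sgn (ε (f k))) := by
        refine Finset.sum_congr rfl fun ε _ => ?_
        rw [Finset.mul_sum]
        refine Finset.sum_congr rfl fun i _ => ?_
        rw [expand ε i, Finset.mul_sum, Finset.mul_sum]
        exact Finset.sum_congr rfl fun f _ => by ring
    _ = ∑ f : Fin m → Fin m, ∑ i : Fin m → Fin n,
          (c i * ∏ k, x (f k) (i k)) * ∑ ε : Fin m → Bool,
            ((∏ k, sgn (ε k)) * ∏ k, sgn (ε (f k))) := by
        rw [sum_comm3]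
        exact Finset.sum_congr rfl fun f _ => Finset.sum_congr rfl fun i _ =>
          (Finset.mul_sum _ _ _).symm
    _ = ∑ f : Fin m → Fin m,
          (if Function.Bijective f then
            (2:ℂ)^m * ∑ i : Fin m → Fin n, c i * ∏ k, x (f k) (i k) else 0) := by
        refine Finset.sum_congr rfl fun f _ => ?_
        rw [signSum f]
        by_cases hf : Function.Bijective f
        · rw [if_pos hf, if_pos hf, Finset.mul_sum]
          exact Finset.sum_congr rfl fun i _ => by ring
        · rw [if_neg hf, if_neg hf]
          simp
    _ = ∑ f ∈ Finset.univ.filter (fun f : Fin m → Fin m => Function.Bijective f),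
          (2:ℂ)^m * ∑ i : Fin m → Fin n, c i * ∏ k, x (f k) (i k) := by
        rw [Finset.sum_filter]
    _ = ∑ σ : Equiv.Perm (Fin m),
          (2:ℂ)^m * ∑ i : Fin m → Fin n, c i * ∏ k, x (σ k) (i k) := by
        refine (Finset.sum_bij (fun (σ : Equiv.Perm (Fin m)) _ => ⇑σ) ?_ ?_ ?_ ?_).symm
        · intro σ _
          exact Finset.mem_filter.mpr ⟨Finset.mem_univ _, σ.bijective⟩
        · intro σ₁ _ σ₂ _ h
          exact Equiv.coe_fn_injective h
        · intro f hf
          exact ⟨Equiv.ofBijective f (Finset.mem_filter.mp hf).2, Finset.mem_univ _, rfl⟩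
        · intro σ _
          rfl
    _ = (2:ℂ)^m * (m.factorial : ℂ) * ∑ i : Fin m → Fin n, c i * ∏ k, x k (i k) := by
        rw [Finset.sum_congr rfl fun σ _ => by rw [reindex_perm c hc x σ]]
        rw [Finset.sum_const, Finset.card_univ, Fintype.card_perm, Fintype.card_fin,
          nsmul_eq_mul]
        push_cast
        ring

/-- The symmetric multilinear form with coefficients `c`. -/
noncomputable def Smap (m n : ℕ) (c : (Fin m → Fin n) → ℂ) :
    ContinuousMultilinearMap ℂ (fun _ : Fin m => (Fin n → ℂ)) ℂ :=
  ∑ i : Fin m → Fin n, c i •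
    ((ContinuousMultilinearMap.mkPiAlgebra ℂ (Fin m) ℂ).compContinuousLinearMap
      fun k => ContinuousLinearMap.proj (i k))

lemma Smap_apply (m n : ℕ) (c : (Fin m → Fin n) → ℂ) (z : Fin m → (Fin n → ℂ)) :
    Smap m n c z = ∑ i : Fin m → Fin n, c i * ∏ k, z k (i k) := by
  simp [Smap, ContinuousMultilinearMap.sum_apply]

lemma Smap_basis (m n : ℕ) (c : (Fin m → Fin n) → ℂ) (j : Fin m → Fin n) :
    Smap m n c (fun k => Pi.single (j k) 1) = c j := by
  rw [Smap_apply]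
  rw [Finset.sum_eq_single j]
  · simp
  · intro i _ hij
    obtain ⟨k, hk⟩ := Function.ne_iff.mp hij
    have : (Pi.single (j k) 1 : Fin n → ℂ) (i k) = 0 := by rw [Pi.single_apply]; simp [hk]
    rw [Finset.prod_eq_zero (Finset.mem_univ k) this, mul_zero]
  · intro h
    exact absurd (Finset.mem_univ j) h

lemma polydisc_isCompact (n : ℕ) :
    IsCompact {z : Fin n → ℂ | ∀ i, ‖z i‖ ≤ 1} := by
  have : {z : Fin n → ℂ | ∀ i, ‖z i‖ ≤ 1}
      = Set.pi Set.univ (fun _ : Fin n => Metric.closedBall (0:ℂ) 1) := by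
    ext z
    simp [Set.mem_pi, Complex.dist_eq, Set.mem_setOf_eq]
  rw [this]
  exact isCompact_univ_pi fun _ => isCompact_closedBall _ _

lemma bddAbove_polydisc (n : ℕ) (f : (Fin n → ℂ) → ℂ) (hf : Continuous f) :
    BddAbove ((fun z => ‖f z‖) '' {z : Fin n → ℂ | ∀ i, ‖z i‖ ≤ 1}) :=
  ((polydisc_isCompact n).image (continuous_norm.comp hf)).bddAbove

lemma le_polydiscSup (n : ℕ) (f : (Fin n → ℂ) → ℂ) (hf : Continuous f)
    (z : Fin n → ℂ) (hz : ∀ i, ‖z i‖ ≤ 1) :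
    ‖f z‖ ≤ polydiscSup n f :=
  le_csSup (bddAbove_polydisc n f hf) (Set.mem_image_of_mem _ hz)

lemma polydiscSup_nonneg (n : ℕ) (f : (Fin n → ℂ) → ℂ) (hf : Continuous f) :
    0 ≤ polydiscSup n f :=
  le_trans (norm_nonneg _) (le_polydiscSup n f hf 0 (by simp))

lemma continuous_poly (n : ℕ) (A : Finset (Fin n → ℕ)) (a : (Fin n → ℕ) → ℂ) :
    Continuous fun z : Fin n → ℂ => ∑ α ∈ A, a α * ∏ i, z i ^ α i := by
  refine continuous_finset_sum _ fun α _ => Continuous.mul continuous_const ?_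
  exact continuous_finset_prod _ fun i _ => (continuous_apply i).pow _

lemma poly_smul (n m : ℕ) (a : (Fin n → ℕ) → ℂ) (r : ℂ) (w : Fin n → ℂ) :
    ∑ α ∈ Finset.Nat.antidiagonalTuple n m, a α * ∏ i, (r * w i) ^ α i
      = r ^ m * ∑ α ∈ Finset.Nat.antidiagonalTuple n m, a α * ∏ i, w i ^ α i := by
  rw [Finset.mul_sum]
  refine Finset.sum_congr rfl fun α hα => ?_
  have hsum : ∑ i, α i = m := Finset.Nat.mem_antidiagonalTuple.mp hα
  have : ∏ i, (r * w i) ^ α i = (∏ i, r ^ α i) * ∏ i, w i ^ α i := by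
    rw [← Finset.prod_mul_distrib]
    exact Finset.prod_congr rfl fun i _ => mul_pow _ _ _
  rw [this, Finset.prod_pow_eq_pow_sum, hsum]
  ring

end BHaux

open BHaux in
/-- **The multilinear Bohnenblust–Hille inequality with exponent `q` implies the
polynomial Bohnenblust–Hille inequality with the same exponent `q`.** -/
theorem multilinear_BH_implies_polynomial_BH (m : ℕ) (hm : 1 ≤ m) (q : ℝ)
    (hq0 : 0 < q)
    (hmulti : ∃ C : ℝ, 0 < C ∧ ∀ n : ℕ, 1 ≤ n →
      ∀ T : ContinuousMultilinearMap ℂ (fun _ : Fin m => (Fin n → ℂ)) ℂ,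
        (∑ i : Fin m → Fin n,
            ‖T (fun k => Pi.single (i k) 1)‖ ^ q) ^ (1 / q)
          ≤ C * multilinearPolydiscSup m n T) :
    ∃ C' : ℝ, 0 < C' ∧ ∀ n : ℕ, 1 ≤ n → ∀ a : (Fin n → ℕ) → ℂ,
      (∑ α ∈ Finset.Nat.antidiagonalTuple n m, ‖a α‖ ^ q) ^ (1 / q)
        ≤ C' * polydiscSup n (fun z =>
            ∑ α ∈ Finset.Nat.antidiagonalTuple n m, a α * ∏ i, z i ^ α i) := by
  classical
  obtain ⟨C, hC, hBH⟩ := hmulti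
  have hm0 : (0:ℝ) < (m:ℝ) := by exact_mod_cast hm
  have hfacpos : (0:ℝ) < (m.factorial : ℝ) := by exact_mod_cast m.factorial_pos
  set Kq : ℝ := (m.factorial : ℝ) ^ |q - 1| with hKq
  have hfac1 : (1:ℝ) ≤ (m.factorial : ℝ) := by exact_mod_cast m.factorial_pos
  have hKq1 : 1 ≤ Kq := Real.one_le_rpow hfac1 (abs_nonneg _)
  have hKqpos : 0 < Kq := lt_of_lt_of_le one_pos hKq1
  have hmm : (0:ℝ) < (m:ℝ)^m / m.factorial := div_pos (pow_pos hm0 m) hfacpos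
  refine ⟨Kq ^ (1/q) * C * ((m:ℝ)^m / m.factorial), by positivity, ?_⟩
  intro n hn a
  set A := Finset.Nat.antidiagonalTuple n m with hA
  set N : (Fin n → ℕ) → ℕ :=
    fun α => (Finset.univ.filter fun i : Fin m → Fin n => cnt i = α).card with hN
  set c : (Fin m → Fin n) → ℂ := fun i => a (cnt i) / (N (cnt i) : ℂ) with hcdef
  set P : (Fin n → ℂ) → ℂ := fun z => ∑ α ∈ A, a α * ∏ i, z i ^ α i with hP
  have hPcont : Continuous P := continuous_poly n A a
  have hsupP : 0 ≤ polydiscSup n P := polydiscSup_nonneg n P hPcont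
  have hc_symm : ∀ (i : Fin m → Fin n) (σ : Equiv.Perm (Fin m)), c (i ∘ σ) = c i := by
    intro i σ; simp only [hcdef, cnt_comp_perm]
  have hmem : ∀ i : Fin m → Fin n, cnt i ∈ A := fun i =>
    Finset.Nat.mem_antidiagonalTuple.mpr (sum_cnt i)
  have hNpos : ∀ α ∈ A, 0 < N α := by
    intro α hα
    obtain ⟨i, hi⟩ := exists_cnt_eq α (Finset.Nat.mem_antidiagonalTuple.mp hα)
    exact Finset.card_pos.mpr ⟨i, Finset.mem_filter.mpr ⟨Finset.mem_univ _, hi⟩⟩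
  -- the diagonal of the multilinear form is the polynomial
  have hdiag : ∀ w : Fin n → ℂ, ∑ i : Fin m → Fin n, c i * ∏ k, w (i k) = P w := by
    intro w
    rw [← Finset.sum_fiberwise_of_maps_to (fun i _ => hmem i) (fun i => c i * ∏ k, w (i k))]
    refine Finset.sum_congr rfl fun α hα => ?_
    have hstep : ∀ i ∈ Finset.univ.filter fun i : Fin m → Fin n => cnt i = α,
        c i * ∏ k, w (i k) = (a α / (N α : ℂ)) * ∏ t, w t ^ α t := by
      intro i hi
      have hci : cnt i = α := (Finset.mem_filter.mp hi).2
      have hc1 : c i = a α / (N α : ℂ) := by simp only [hcdef, hci]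
      rw [hc1, prod_comp_cnt w i, hci]
    rw [Finset.sum_congr rfl hstep, Finset.sum_const, nsmul_eq_mul]
    have hcard : (Finset.univ.filter fun i : Fin m → Fin n => cnt i = α).card = N α := by
      rw [hN]
    rw [hcard]
    have hne : ((N α : ℂ)) ≠ 0 := by
      have := hNpos α hα
      exact_mod_cast this.ne'
    field_simp
  set S := Smap m n c with hS
  have hSiso : ∀ x : Fin m → (Fin n → ℂ), (∀ k t, ‖x k t‖ ≤ 1) →
      ‖S x‖ ≤ (m:ℝ)^m / m.factorial * polydiscSup n P := by
    intro x hx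
    have hpol : (2:ℂ)^m * (m.factorial : ℂ) * S x
        = ∑ ε : Fin m → Bool, (∏ k, sgn (ε k)) *
            P (fun t => ∑ j, sgn (ε j) * x j t) := by
      rw [hS, Smap_apply, ← polarization n c hc_symm x]
      refine Finset.sum_congr rfl fun ε _ => ?_
      congr 1
      rw [← hdiag (fun t => ∑ j, sgn (ε j) * x j t)]
    have hmC : ((m:ℂ)) ≠ 0 := by
      have : (0:ℕ) < m := hm
      exact_mod_cast this.ne'
    have hPbound : ∀ ε : Fin m → Bool,
        ‖P (fun t => ∑ j, sgn (ε j) * x j t)‖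
          ≤ (m:ℝ)^m * polydiscSup n P := by
      intro ε
      have huP : ∀ t, ‖(m:ℂ)⁻¹ * ∑ j, sgn (ε j) * x j t‖ ≤ 1 := by
        intro t
        rw [norm_mul, norm_inv, Complex.norm_natCast]
        have h2 : ‖∑ j, sgn (ε j) * x j t‖ ≤ (m:ℝ) := by
          calc ‖∑ j, sgn (ε j) * x j t‖
              ≤ ∑ j, ‖sgn (ε j) * x j t‖ := norm_sum_le _ _
            _ ≤ ∑ _j : Fin m, 1 := Finset.sum_le_sum fun j _ => by
                rw [norm_mul, abs_sgn, one_mul]; exact hx j t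
            _ = (m:ℝ) := by simp
        calc ((m:ℝ))⁻¹ * ‖∑ j, sgn (ε j) * x j t‖ ≤ ((m:ℝ))⁻¹ * (m:ℝ) :=
              mul_le_mul_of_nonneg_left h2 (by positivity)
          _ = 1 := by field_simp
      have hPwu : P (fun t => ∑ j, sgn (ε j) * x j t)
          = (m:ℂ)^m * P (fun t => (m:ℂ)⁻¹ * ∑ j, sgn (ε j) * x j t) := by
        have harg : (fun t => ∑ j, sgn (ε j) * x j t)
            = fun t => (m:ℂ) * ((m:ℂ)⁻¹ * ∑ j, sgn (ε j) * x j t) := by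
          funext t; field_simp
        rw [harg, hP, hA]
        exact poly_smul n m a (m:ℂ) _
      rw [hPwu, norm_mul, norm_pow, Complex.norm_natCast]
      exact mul_le_mul_of_nonneg_left
        (le_polydiscSup n P hPcont _ huP) (by positivity)
    have habs : ‖(2:ℂ)^m * (m.factorial : ℂ) * S x‖
        = 2^m * (m.factorial:ℝ) * ‖S x‖ := by
      rw [norm_mul, norm_mul, norm_pow, Complex.norm_two, Complex.norm_natCast]
    have hsum : ‖∑ ε : Fin m → Bool, (∏ k, sgn (ε k)) *
            P (fun t => ∑ j, sgn (ε j) * x j t)‖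
        ≤ 2^m * ((m:ℝ)^m * polydiscSup n P) := by
      calc ‖∑ ε : Fin m → Bool, (∏ k, sgn (ε k)) *
              P (fun t => ∑ j, sgn (ε j) * x j t)‖
          ≤ ∑ ε : Fin m → Bool, ‖(∏ k, sgn (ε k)) *
              P (fun t => ∑ j, sgn (ε j) * x j t)‖ := norm_sum_le _ _
        _ ≤ ∑ _ε : Fin m → Bool, (m:ℝ)^m * polydiscSup n P := by
            refine Finset.sum_le_sum fun ε _ => ?_
            rw [norm_mul]
            have h1 : ‖∏ k, sgn (ε k)‖ = 1 := by
              rw [norm_prod]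
              simp [abs_sgn]
            rw [h1, one_mul]
            exact hPbound ε
        _ = 2^m * ((m:ℝ)^m * polydiscSup n P) := by
            rw [Finset.sum_const, Finset.card_univ, nsmul_eq_mul]
            simp [Fintype.card_fun]
    have hkey : 2^m * (m.factorial:ℝ) * ‖S x‖
        ≤ 2^m * ((m:ℝ)^m * polydiscSup n P) := by
      rw [← habs, hpol]
      exact hsum
    have h2pos : (0:ℝ) < 2^m * (m.factorial:ℝ) := by positivity
    refine le_of_mul_le_mul_left ?_ h2pos
    calc 2^m * (m.factorial:ℝ) * ‖S x‖
        ≤ 2^m * ((m:ℝ)^m * polydiscSup n P) := hkey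
      _ = 2^m * (m.factorial:ℝ) * ((m:ℝ)^m / m.factorial * polydiscSup n P) := by
          field_simp
  have hSup_le : multilinearPolydiscSup m n S
      ≤ (m:ℝ)^m / m.factorial * polydiscSup n P := by
    apply Real.sSup_le
    · rintro y ⟨x, hx, rfl⟩
      exact hSiso x hx
    · exact mul_nonneg hmm.le hsupP
  have hmain := hBH n hn S
  have hbasis : ∀ i : Fin m → Fin n,
      ‖S (fun k => Pi.single (i k) 1)‖ = ‖c i‖ := by
    intro i; rw [hS, Smap_basis]
  rw [Finset.sum_congr rfl (fun i _ => by rw [hbasis i])] at hmain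
  -- coefficient bound
  have hfiber : ∀ α ∈ A, ‖a α‖ ^ q
      ≤ Kq * ∑ i ∈ Finset.univ.filter (fun i : Fin m → Fin n => cnt i = α),
          ‖c i‖ ^ q := by
    intro α hα
    have hNp := hNpos α hα
    have hNle : N α ≤ m.factorial := by
      rw [hN]; exact card_fiber_le α
    have hNR : (0:ℝ) < (N α : ℝ) := by exact_mod_cast hNp
    have hceq : ∀ i ∈ Finset.univ.filter (fun i : Fin m → Fin n => cnt i = α),
        ‖c i‖ ^ q = (‖a α‖ / (N α : ℝ)) ^ q := by
      intro i hi
      have hci : cnt i = α := (Finset.mem_filter.mp hi).2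
      have hc1 : c i = a α / (N α : ℂ) := by simp only [hcdef, hci]
      rw [hc1, norm_div, Complex.norm_natCast]
    rw [Finset.sum_congr rfl hceq, Finset.sum_const, nsmul_eq_mul]
    have hcard : (Finset.univ.filter fun i : Fin m → Fin n => cnt i = α).card = N α := by
      rw [hN]
    rw [hcard]
    have hX : (0:ℝ) ≤ ‖a α‖ := norm_nonneg _
    rw [Real.div_rpow hX hNR.le]
    have h1 : ((N α : ℝ)) ^ q ≤ Kq * N α := by
      rcases le_total q 1 with h | h
      · have h2 : ((N α:ℝ))^q ≤ ((N α:ℝ))^(1:ℝ) :=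
          Real.rpow_le_rpow_of_exponent_le (by exact_mod_cast hNp) h
        rw [Real.rpow_one] at h2
        calc ((N α : ℝ)) ^ q ≤ (N α : ℝ) := h2
          _ = 1 * (N α : ℝ) := (one_mul _).symm
          _ ≤ Kq * N α := mul_le_mul_of_nonneg_right hKq1 hNR.le
      · have e1 : ((N α:ℝ))^q = (N α:ℝ)^(q-1) * (N α:ℝ) := by
          rw [show q = (q-1)+1 by ring, Real.rpow_add hNR, Real.rpow_one]
          ring_nf
        have e2 : ((N α:ℝ))^(q-1) ≤ (m.factorial:ℝ)^(q-1) :=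
          Real.rpow_le_rpow hNR.le (by exact_mod_cast hNle) (by linarith)
        have e3 : (m.factorial:ℝ)^(q-1) = Kq := by
          rw [hKq, abs_of_nonneg (by linarith : (0:ℝ) ≤ q - 1)]
        rw [e1]
        exact mul_le_mul_of_nonneg_right (e3 ▸ e2) hNR.le
    have hNq : (0:ℝ) < (N α:ℝ)^q := Real.rpow_pos_of_pos hNR q
    have hrw : Kq * ((N α:ℝ) * (‖a α‖^q / (N α:ℝ)^q))
        = (Kq * (N α:ℝ) / (N α:ℝ)^q) * ‖a α‖^q := by ring
    rw [hrw]
    exact le_mul_of_one_le_left (Real.rpow_nonneg hX q) ((one_le_div hNq).mpr h1)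
  have hcoef : ∑ α ∈ A, ‖a α‖ ^ q
      ≤ Kq * ∑ i : Fin m → Fin n, ‖c i‖ ^ q := by
    rw [← Finset.sum_fiberwise_of_maps_to (fun i _ => hmem i)
      (fun i => ‖c i‖ ^ q), Finset.mul_sum]
    exact Finset.sum_le_sum hfiber
  have hsum_nonneg : (0:ℝ) ≤ ∑ i : Fin m → Fin n, ‖c i‖^q :=
    Finset.sum_nonneg fun i _ => Real.rpow_nonneg (norm_nonneg _) q
  have hq' : (0:ℝ) ≤ 1/q := by positivity
  calc (∑ α ∈ A, ‖a α‖^q)^(1/q)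
      ≤ (Kq * ∑ i : Fin m → Fin n, ‖c i‖^q)^(1/q) :=
        Real.rpow_le_rpow (Finset.sum_nonneg fun α _ =>
          Real.rpow_nonneg (norm_nonneg _) q) hcoef hq'
    _ = Kq^(1/q) * (∑ i : Fin m → Fin n, ‖c i‖^q)^(1/q) :=
        Real.mul_rpow hKqpos.le hsum_nonneg
    _ ≤ Kq^(1/q) * (C * multilinearPolydiscSup m n S) :=
        mul_le_mul_of_nonneg_left hmain (Real.rpow_nonneg hKqpos.le _)
    _ ≤ Kq^(1/q) * (C * ((m:ℝ)^m / m.factorial * polydiscSup n P)) := by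
        refine mul_le_mul_of_nonneg_left ?_ (Real.rpow_nonneg hKqpos.le _)
        exact mul_le_mul_of_nonneg_left hSup_le hC.le
    _ = Kq^(1/q) * C * ((m:ℝ)^m / m.factorial) * polydiscSup n P := by ring
end
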